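/- arXiv:1606.01948 — 4 statements merged into one kernel-verified Lean document; each statement's English description precedes it below -/
import Mathlib

section
/- Let $x$ be an $n \times n$ matrix over a commutative ring, let $I, J \subseteq \{1,\dots,n\}$ be subsets with $|I| = |J|$, let $i < k$ be indices not in $I$, and let $j < l$ be indices not in $J$. Denoting by $\Delta^{A,B}(x)$ the determinant of the submatrix of $x$ with rows indexed by $A$ and columns indexed by $B$ (both taken in increasing order), one has $\Delta^{I\cup\{i\},J\cup\{j\}}(x)\,\Delta^{I\cup\{k\},J\cup\{l\}}(x) = \Delta^{I\cup\{i\},J\cup\{l\}}(x)\,\Delta^{I\cup\{k\},J\cup\{j\}}(x) + \Delta^{I,J}(x)\,\Delta^{I\cup\{i,k\},J\cup\{j,l\}}(x)$. -/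
/-- The minor `Δ^{A,B}(x)`: determinant of the submatrix of `x` with rows indexed
by `A` and columns indexed by `B`, both taken in increasing order. By convention it
is `0` when `|A| ≠ |B|` (and `1` when both are empty). -/
def minor {n : ℕ} {R : Type*} [CommRing R] (x : Matrix (Fin n) (Fin n) R)
    (A B : Finset (Fin n)) : R :=
  if h : A.card = B.card then
    Matrix.det (Matrix.of fun i j : Fin A.card =>
      x (A.orderEmbOfFin rfl i) (B.orderEmbOfFin h.symm j))
  else 0

open Matrix Finset

section Aux

set_option linter.unusedSectionVars false

variable {R : Type*} [CommRing R] {N : ℕ}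

lemma det_updateColumn_single (A : Matrix (Fin (N + 1)) (Fin (N + 1)) R)
    (i j : Fin (N + 1)) :
    (A.updateCol j (Pi.single i 1)).det
      = (-1) ^ ((i : ℕ) + (j : ℕ)) * (A.submatrix i.succAbove j.succAbove).det := by
  rw [Matrix.det_succ_column (A.updateCol j (Pi.single i 1)) j,
    Finset.sum_eq_single i]
  · have h1 : (A.updateCol j (Pi.single i 1)) i j = 1 := by
      simp [Matrix.updateCol_self]
    have h2 : (A.updateCol j (Pi.single i 1)).submatrix i.succAbove j.succAbove
        = A.submatrix i.succAbove j.succAbove := by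
      ext p q
      simp [Matrix.submatrix_apply, Matrix.updateCol_apply, Fin.succAbove_ne]
    rw [h1, h2, mul_one]
  · intro q _ hq
    have : (A.updateCol j (Pi.single i 1)) q j = 0 := by
      simp [Matrix.updateCol_self, Pi.single_apply, hq]
    rw [this]; ring
  · simp

lemma adjugate_eq_det_submatrix (A : Matrix (Fin (N + 1)) (Fin (N + 1)) R)
    (i j : Fin (N + 1)) :
    A.adjugate i j = (-1) ^ ((i : ℕ) + (j : ℕ)) * (A.submatrix j.succAbove i.succAbove).det := by
  rw [Matrix.adjugate_apply, ← Matrix.det_transpose, ← Matrix.updateCol_transpose,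
    det_updateColumn_single, ← Matrix.det_transpose (A.submatrix _ _),
    Matrix.transpose_submatrix]

lemma updateCol_swap (A : Matrix (Fin (N + 2)) (Fin (N + 2)) R) {c d : Fin (N + 2)}
    (hcd : c ≠ d) (u v : Fin (N + 2) → R) :
    (A.updateCol c u).updateCol d v = (A.updateCol d v).updateCol c u := by
  ext p q
  by_cases hqd : q = d
  · subst hqd
    rw [Matrix.updateCol_self, Matrix.updateCol_ne hcd.symm, Matrix.updateCol_self]
  · rw [Matrix.updateCol_ne hqd]
    by_cases hqc : q = c
    · subst hqc
      rw [Matrix.updateCol_self, Matrix.updateCol_self]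
    · rw [Matrix.updateCol_ne hqc, Matrix.updateCol_ne hqc, Matrix.updateCol_ne hqd]

lemma dj_domain {R : Type*} [CommRing R] [IsDomain R] {N : ℕ}
    (y : Matrix (Fin (N + 2)) (Fin (N + 2)) R) (hy : y.det ≠ 0)
    (a b c d : Fin (N + 2)) (hab : a < b) (hcd : c < d)
    (b' d' : Fin (N + 1)) (hb' : a.succAbove b' = b) (hd' : c.succAbove d' = d) :
    (y.submatrix b.succAbove d.succAbove).det * (y.submatrix a.succAbove c.succAbove).det
      = (y.submatrix b.succAbove c.succAbove).det * (y.submatrix a.succAbove d.succAbove).det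
        + (y.submatrix (a.succAbove ∘ b'.succAbove) (c.succAbove ∘ d'.succAbove)).det
            * y.det := by
  classical
  have hcdne : c ≠ d := hcd.ne
  have hbb' : (b : ℕ) = (b' : ℕ) + 1 := by
    rcases lt_or_ge b'.castSucc a with h | h
    · rw [Fin.succAbove_of_castSucc_lt _ _ h] at hb'
      rw [hb'] at h
      exact absurd hab h.asymm
    · rw [Fin.succAbove_of_le_castSucc _ _ h] at hb'
      rw [← hb', Fin.val_succ]
  have hdd' : (d : ℕ) = (d' : ℕ) + 1 := by
    rcases lt_or_ge d'.castSucc c with h | h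
    · rw [Fin.succAbove_of_castSucc_lt _ _ h] at hd'
      rw [hd'] at h
      exact absurd hcd h.asymm
    · rw [Fin.succAbove_of_le_castSucc _ _ h] at hd'
      rw [← hd', Fin.val_succ]
  set D := y.det with hD
  set M : Matrix (Fin (N + 2)) (Fin (N + 2)) R :=
    ((1 : Matrix (Fin (N + 2)) (Fin (N + 2)) R).updateCol c
        (fun p => y.adjugate p a)).updateCol d (fun p => y.adjugate p b) with hM
  have hMtd : ∀ t, M t d = y.adjugate t b := by
    intro t; rw [hM, Matrix.updateCol_self]
  have hMtc : ∀ t, M t c = y.adjugate t a := by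
    intro t; rw [hM, Matrix.updateCol_ne hcdne, Matrix.updateCol_self]
  have hMt1 : ∀ t q, q ≠ c → q ≠ d →
      M t q = (1 : Matrix (Fin (N + 2)) (Fin (N + 2)) R) t q := by
    intro t q hqc hqd
    rw [hM, Matrix.updateCol_ne hqd, Matrix.updateCol_ne hqc]
  have hadj : ∀ p q : Fin (N + 2),
      (∑ t, y p t * y.adjugate t q) = D * (if p = q then 1 else 0) := by
    intro p q
    have h := congrFun (congrFun (Matrix.mul_adjugate y) p) q
    simpa [Matrix.mul_apply, Matrix.one_apply, Matrix.smul_apply] using h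
  have hyM : y * M = (y.updateCol c (D • (Pi.single a 1 : Fin (N + 2) → R))).updateCol d
      (D • (Pi.single b 1 : Fin (N + 2) → R)) := by
    ext p q
    rw [Matrix.mul_apply]
    by_cases hqd : q = d
    · rw [hqd]
      simp_rw [hMtd]
      rw [hadj p b, Matrix.updateCol_self]
      simp [Pi.single_apply]
    · by_cases hqc : q = c
      · rw [hqc]
        simp_rw [hMtc]
        rw [hadj p a, Matrix.updateCol_ne hcdne, Matrix.updateCol_self]
        simp [Pi.single_apply]
      · simp_rw [fun t => hMt1 t q hqc hqd]
        rw [Matrix.updateCol_ne hqd, Matrix.updateCol_ne hqc]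
        simp [Matrix.one_apply, mul_ite, mul_one, mul_zero, Finset.sum_ite_eq']
  have hdetM : M.det = y.adjugate c a * y.adjugate d b - y.adjugate c b * y.adjugate d a := by
    have hMrw : M = 1 + (Matrix.of fun (p : Fin (N + 2)) (t : Fin 2) =>
          if t = 0 then y.adjugate p a - (1 : Matrix (Fin (N + 2)) (Fin (N + 2)) R) p c
          else y.adjugate p b - (1 : Matrix (Fin (N + 2)) (Fin (N + 2)) R) p d) *
        (Matrix.of fun (t : Fin 2) (q : Fin (N + 2)) =>
          if t = 0 then (if q = c then (1 : R) else 0) else (if q = d then 1 else 0)) := by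
      ext p q
      rw [Matrix.add_apply, Matrix.mul_apply, Fin.sum_univ_two]
      by_cases hqd : q = d
      · rw [hqd, hMtd]
        simp [Matrix.one_apply, hcdne.symm]
      · by_cases hqc : q = c
        · rw [hqc, hMtc]
          simp [Matrix.one_apply, hcdne, hqd, hqc]
        · rw [hMt1 p q hqc hqd]
          simp [hqc, hqd]
    rw [hMrw, Matrix.det_one_add_mul_comm]
    have h2 : (1 + (Matrix.of fun (t : Fin 2) (q : Fin (N + 2)) =>
          if t = 0 then (if q = c then (1 : R) else 0) else (if q = d then 1 else 0)) *
        (Matrix.of fun (p : Fin (N + 2)) (t : Fin 2) =>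
          if t = 0 then y.adjugate p a - (1 : Matrix (Fin (N + 2)) (Fin (N + 2)) R) p c
          else y.adjugate p b - (1 : Matrix (Fin (N + 2)) (Fin (N + 2)) R) p d))
        = !![y.adjugate c a, y.adjugate c b; y.adjugate d a, y.adjugate d b] := by
      ext t u
      rw [Matrix.add_apply, Matrix.mul_apply]
      fin_cases t <;> fin_cases u <;>
        simp [Matrix.one_apply, hcdne, hcdne.symm, ite_mul, Finset.sum_ite_eq']
    rw [h2, Matrix.det_fin_two_of]
  have hsub : (y.updateCol d (Pi.single b 1)).submatrix a.succAbove c.succAbove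
      = (y.submatrix a.succAbove c.succAbove).updateCol d' (Pi.single b' 1) := by
    ext p q
    by_cases hq : q = d'
    · rw [hq, Matrix.submatrix_apply, hd', Matrix.updateCol_self, Matrix.updateCol_self]
      rw [Pi.single_apply, Pi.single_apply, ← hb']
      simp [Fin.succAbove_right_inj]
    · have hne : c.succAbove q ≠ d := by
        rw [← hd']
        exact fun h => hq (Fin.succAbove_right_injective h)
      rw [Matrix.submatrix_apply, Matrix.updateCol_ne hne, Matrix.updateCol_ne hq,
        Matrix.submatrix_apply]
  have key : D * M.det
      = D * (D * ((-1 : R) ^ ((a : ℕ) + (c : ℕ)) * ((-1 : R) ^ ((b' : ℕ) + (d' : ℕ))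
          * (y.submatrix (a.succAbove ∘ b'.succAbove)
              (c.succAbove ∘ d'.succAbove)).det))) := by
    have h1 : D * M.det = ((y.updateCol c (D • (Pi.single a 1 : Fin (N + 2) → R))).updateCol
        d (D • (Pi.single b 1 : Fin (N + 2) → R))).det := by
      rw [← hyM, Matrix.det_mul]
    rw [h1, updateCol_swap _ hcdne, Matrix.det_updateCol_smul,
      updateCol_swap _ hcdne.symm, Matrix.det_updateCol_smul,
      updateCol_swap _ hcdne, det_updateColumn_single, hsub, det_updateColumn_single,
      Matrix.submatrix_submatrix]
  rw [hdetM] at key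
  rw [adjugate_eq_det_submatrix, adjugate_eq_det_submatrix, adjugate_eq_det_submatrix,
    adjugate_eq_det_submatrix, hbb', hdd'] at key
  have key2 : (D * ((-1 : R) ^ ((a : ℕ) + (c : ℕ)) * (-1 : R) ^ ((b' : ℕ) + (d' : ℕ))))
        * ((y.submatrix a.succAbove c.succAbove).det
            * (y.submatrix b.succAbove d.succAbove).det
          - (y.submatrix b.succAbove c.succAbove).det
            * (y.submatrix a.succAbove d.succAbove).det)
      = (D * ((-1 : R) ^ ((a : ℕ) + (c : ℕ)) * (-1 : R) ^ ((b' : ℕ) + (d' : ℕ))))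
        * (D * (y.submatrix (a.succAbove ∘ b'.succAbove)
            (c.succAbove ∘ d'.succAbove)).det) := by
    linear_combination key
  have hDε : D * ((-1 : R) ^ ((a : ℕ) + (c : ℕ)) * (-1 : R) ^ ((b' : ℕ) + (d' : ℕ))) ≠ 0 :=
    mul_ne_zero hy (mul_ne_zero (pow_ne_zero _ (neg_ne_zero.mpr one_ne_zero))
      (pow_ne_zero _ (neg_ne_zero.mpr one_ne_zero)))
  have key3 := mul_left_cancel₀ hDε key2
  linear_combination key3

end Aux

section Transfer

lemma dj {R : Type*} [CommRing R] {N : ℕ}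
    (y : Matrix (Fin (N + 2)) (Fin (N + 2)) R)
    (a b c d : Fin (N + 2)) (hab : a < b) (hcd : c < d)
    (b' d' : Fin (N + 1)) (hb' : a.succAbove b' = b) (hd' : c.succAbove d' = d) :
    (y.submatrix b.succAbove d.succAbove).det * (y.submatrix a.succAbove c.succAbove).det
      = (y.submatrix b.succAbove c.succAbove).det * (y.submatrix a.succAbove d.succAbove).det
        + (y.submatrix (a.succAbove ∘ b'.succAbove) (c.succAbove ∘ d'.succAbove)).det
            * y.det := by
  classical
  set X := Matrix.mvPolynomialX (Fin (N + 2)) (Fin (N + 2)) ℤ with hX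
  set φ : MvPolynomial (Fin (N + 2) × Fin (N + 2)) ℤ →+* R :=
    (MvPolynomial.eval₂Hom (Int.castRingHom R) fun p => y p.1 p.2) with hφ
  have hdet : ∀ {k : ℕ} (f g : Fin k → Fin (N + 2)),
      φ ((X.submatrix f g).det) = (y.submatrix f g).det := by
    intro k f g
    rw [RingHom.map_det]
    congr 1
    ext p q
    simp [hX, hφ, Matrix.mvPolynomialX]
  have hdet0 : φ X.det = y.det := by
    rw [RingHom.map_det]
    congr 1
    ext p q
    simp [hX, hφ, Matrix.mvPolynomialX]
  have base := dj_domain X (Matrix.det_mvPolynomialX_ne_zero (Fin (N + 2)) ℤ) a b c d hab hcd b' d' hb' hd'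
  have hφb := congrArg φ base
  rw [_root_.map_add, _root_.map_mul, _root_.map_mul, _root_.map_mul, hdet, hdet, hdet, hdet, hdet, hdet0] at hφb
  exact hφb

lemma minor_eq_det {n : ℕ} {R : Type*} [CommRing R] (x : Matrix (Fin n) (Fin n) R)
    {A B : Finset (Fin n)} {k : ℕ} (hA : A.card = k) (hB : B.card = k)
    (f g : Fin k → Fin n) (hf : StrictMono f) (hg : StrictMono g)
    (hfA : ∀ t, f t ∈ A) (hgB : ∀ t, g t ∈ B) :
    minor x A B = (Matrix.of fun p q : Fin k => x (f p) (g q)).det := by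
  subst hA
  unfold minor
  rw [dif_pos hB.symm]
  have hfe := Finset.orderEmbOfFin_unique (rfl : A.card = A.card) hfA hf
  have hge := Finset.orderEmbOfFin_unique hB hgB hg
  congr 1
  ext p q
  rw [Matrix.of_apply, Matrix.of_apply, hfe, hge]

end Transfer


/-- Desnanot–Jacobi / Dodgson-type identity (Fomin–Zelevinsky, Theorem 1.17). -/
theorem minor_exchange_identity {n : ℕ} {R : Type*} [CommRing R]
    (x : Matrix (Fin n) (Fin n) R) (I J : Finset (Fin n)) (hIJ : I.card = J.card)
    (i k : Fin n) (hiI : i ∉ I) (hkI : k ∉ I) (hik : i < k)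
    (j l : Fin n) (hjJ : j ∉ J) (hlJ : l ∉ J) (hjl : j < l) :
    minor x (insert i I) (insert j J) * minor x (insert k I) (insert l J)
      = minor x (insert i I) (insert l J) * minor x (insert k I) (insert j J)
        + minor x I J * minor x (insert i (insert k I)) (insert j (insert l J)) := by

  classical
  have hiK : i ∉ insert k I := by simp [Finset.mem_insert, hik.ne, hiI]
  have hjL : j ∉ insert l J := by simp [Finset.mem_insert, hjl.ne, hjJ]
  have hA2 : (insert i (insert k I)).card = I.card + 2 := by
    rw [Finset.card_insert_of_notMem hiK, Finset.card_insert_of_notMem hkI]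
  have hB2 : (insert j (insert l J)).card = I.card + 2 := by
    rw [Finset.card_insert_of_notMem hjL, Finset.card_insert_of_notMem hlJ, ← hIJ]
  set r := (insert i (insert k I)).orderEmbOfFin hA2 with hr
  set s := (insert j (insert l J)).orderEmbOfFin hB2 with hs
  obtain ⟨a, ha⟩ : ∃ a, r a = i := by
    have h : i ∈ Set.range ⇑r := by
      rw [hr, Finset.range_orderEmbOfFin]
      exact Finset.mem_coe.mpr (Finset.mem_insert_self _ _)
    exact h
  obtain ⟨b, hb⟩ : ∃ b, r b = k := by
    have h : k ∈ Set.range ⇑r := by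
      rw [hr, Finset.range_orderEmbOfFin]
      exact Finset.mem_coe.mpr (Finset.mem_insert_of_mem (Finset.mem_insert_self _ _))
    exact h
  obtain ⟨c, hc⟩ : ∃ c, s c = j := by
    have h : j ∈ Set.range ⇑s := by
      rw [hs, Finset.range_orderEmbOfFin]
      exact Finset.mem_coe.mpr (Finset.mem_insert_self _ _)
    exact h
  obtain ⟨d, hd⟩ : ∃ d, s d = l := by
    have h : l ∈ Set.range ⇑s := by
      rw [hs, Finset.range_orderEmbOfFin]
      exact Finset.mem_coe.mpr (Finset.mem_insert_of_mem (Finset.mem_insert_self _ _))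
    exact h
  have hab : a < b := by
    have h := hik
    rw [← ha, ← hb] at h
    exact r.lt_iff_lt.mp h
  have hcd : c < d := by
    have h := hjl
    rw [← hc, ← hd] at h
    exact s.lt_iff_lt.mp h
  obtain ⟨b', hb'⟩ : ∃ b', a.succAbove b' = b := ⟨_, Fin.succAbove_pred_of_lt a b hab⟩
  obtain ⟨d', hd'⟩ : ∃ d', c.succAbove d' = d := ⟨_, Fin.succAbove_pred_of_lt c d hcd⟩
  -- membership helpers
  have hrmem : ∀ t, r t ∈ insert i (insert k I) := fun t => Finset.orderEmbOfFin_mem _ hA2 t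
  have hsmem : ∀ t, s t ∈ insert j (insert l J) := fun t => Finset.orderEmbOfFin_mem _ hB2 t
  have hrne : ∀ (p : Fin (I.card + 2)) t, r (p.succAbove t) ≠ r p := fun p t h =>
    Fin.succAbove_ne p t (r.injective h)
  have hsne : ∀ (p : Fin (I.card + 2)) t, s (p.succAbove t) ≠ s p := fun p t h =>
    Fin.succAbove_ne p t (s.injective h)
  have hfiI : ∀ t, r (b.succAbove t) ∈ insert i I := by
    intro t
    rcases Finset.mem_insert.mp (hrmem (b.succAbove t)) with h | h
    · rw [h]; exact Finset.mem_insert_self i I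
    · rcases Finset.mem_insert.mp h with h' | h'
      · exact absurd (h'.trans hb.symm) (hrne b t)
      · exact Finset.mem_insert_of_mem h'
  have hfkI : ∀ t, r (a.succAbove t) ∈ insert k I := by
    intro t
    rcases Finset.mem_insert.mp (hrmem (a.succAbove t)) with h | h
    · exact absurd (h.trans ha.symm) (hrne a t)
    · exact h
  have hfI : ∀ t, r (a.succAbove (b'.succAbove t)) ∈ I := by
    intro t
    rcases Finset.mem_insert.mp (hrmem (a.succAbove (b'.succAbove t))) with h | h
    · exact absurd (h.trans ha.symm) (hrne a _)
    · rcases Finset.mem_insert.mp h with h' | h'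
      · exfalso
        have hkb : r (a.succAbove (b'.succAbove t)) = r b := h'.trans hb.symm
        have : a.succAbove (b'.succAbove t) = a.succAbove b' := by
          rw [hb']; exact r.injective hkb
        exact Fin.succAbove_ne b' t (Fin.succAbove_right_injective this)
      · exact h'
  have hgjJ : ∀ t, s (d.succAbove t) ∈ insert j J := by
    intro t
    rcases Finset.mem_insert.mp (hsmem (d.succAbove t)) with h | h
    · rw [h]; exact Finset.mem_insert_self j J
    · rcases Finset.mem_insert.mp h with h' | h'
      · exact absurd (h'.trans hd.symm) (hsne d t)
      · exact Finset.mem_insert_of_mem h'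
  have hglJ : ∀ t, s (c.succAbove t) ∈ insert l J := by
    intro t
    rcases Finset.mem_insert.mp (hsmem (c.succAbove t)) with h | h
    · exact absurd (h.trans hc.symm) (hsne c t)
    · exact h
  have hgJ : ∀ t, s (c.succAbove (d'.succAbove t)) ∈ J := by
    intro t
    rcases Finset.mem_insert.mp (hsmem (c.succAbove (d'.succAbove t))) with h | h
    · exact absurd (h.trans hc.symm) (hsne c _)
    · rcases Finset.mem_insert.mp h with h' | h'
      · exfalso
        have hld : s (c.succAbove (d'.succAbove t)) = s d := h'.trans hd.symm
        have : c.succAbove (d'.succAbove t) = c.succAbove d' := by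
          rw [hd']; exact s.injective hld
        exact Fin.succAbove_ne d' t (Fin.succAbove_right_injective this)
      · exact h'
  -- cardinalities
  have hciI : (insert i I).card = I.card + 1 := Finset.card_insert_of_notMem hiI
  have hckI : (insert k I).card = I.card + 1 := Finset.card_insert_of_notMem hkI
  have hcjJ : (insert j J).card = I.card + 1 := by
    rw [Finset.card_insert_of_notMem hjJ, ← hIJ]
  have hclJ : (insert l J).card = I.card + 1 := by
    rw [Finset.card_insert_of_notMem hlJ, ← hIJ]
  -- strict monotonicity
  have hrm : StrictMono fun t : Fin (I.card + 2) => r t := r.strictMono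
  have hsm : StrictMono fun t : Fin (I.card + 2) => s t := s.strictMono
  rw [minor_eq_det x hciI hcjJ (fun t => r (b.succAbove t)) (fun t => s (d.succAbove t))
      (r.strictMono.comp (Fin.strictMono_succAbove b))
      (s.strictMono.comp (Fin.strictMono_succAbove d)) hfiI hgjJ,
    minor_eq_det x hckI hclJ (fun t => r (a.succAbove t)) (fun t => s (c.succAbove t))
      (r.strictMono.comp (Fin.strictMono_succAbove a))
      (s.strictMono.comp (Fin.strictMono_succAbove c)) hfkI hglJ,
    minor_eq_det x hciI hclJ (fun t => r (b.succAbove t)) (fun t => s (c.succAbove t))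
      (r.strictMono.comp (Fin.strictMono_succAbove b))
      (s.strictMono.comp (Fin.strictMono_succAbove c)) hfiI hglJ,
    minor_eq_det x hckI hcjJ (fun t => r (a.succAbove t)) (fun t => s (d.succAbove t))
      (r.strictMono.comp (Fin.strictMono_succAbove a))
      (s.strictMono.comp (Fin.strictMono_succAbove d)) hfkI hgjJ,
    minor_eq_det x (rfl : I.card = I.card) hIJ.symm
      (fun t => r (a.succAbove (b'.succAbove t))) (fun t => s (c.succAbove (d'.succAbove t)))
      (r.strictMono.comp ((Fin.strictMono_succAbove a).comp (Fin.strictMono_succAbove b')))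
      (s.strictMono.comp ((Fin.strictMono_succAbove c).comp (Fin.strictMono_succAbove d')))
      hfI hgJ,
    minor_eq_det x hA2 hB2 (fun t => r t) (fun t => s t) hrm hsm hrmem hsmem]
  exact dj (Matrix.of fun p q => x (r p) (s q)) a b c d hab hcd b' d' hb' hd'
end

section
/- Let $x$ be an $n \times n$ matrix over a commutative ring, let $I, J \subseteq \{1,\dots,n\}$ with $|I| = |J|+1$, let $i \notin I$, and let $j < k < l$ be indices not in $J$. Then $\Delta^{I,J\cup\{k\}}(x)\,\Delta^{I\cup\{i\},J\cup\{j,l\}}(x) = \Delta^{I,J\cup\{j\}}(x)\,\Delta^{I\cup\{i\},J\cup\{k,l\}}(x) + \Delta^{I,J\cup\{l\}}(x)\,\Delta^{I\cup\{i\},J\cup\{j,k\}}(x)$. -/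
open Finset Matrix Equiv

namespace ThreeTermAux

variable {n : ℕ} {R : Type*} [CommRing R]

/-- number of elements of `J` below `c` -/
def posn (J : Finset (Fin n)) (c : Fin n) : ℕ := (J.filter (fun e => e < c)).card

lemma posn_le (J : Finset (Fin n)) (c : Fin n) : posn J c ≤ J.card :=
  Finset.card_le_card (Finset.filter_subset _ _)

lemma posn_insert {J : Finset (Fin n)} {c₁ c₂ : Fin n} (h : c₁ < c₂) :
    posn (insert c₂ J) c₁ = posn J c₁ := by
  unfold posn
  rw [Finset.filter_insert, if_neg (by simpa using h.le)]

lemma orderEmbOfFin_lt_iff {J : Finset (Fin n)} {m : ℕ} (hm : J.card = m) {c : Fin n}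
    (hc : c ∉ J) (t : Fin m) : J.orderEmbOfFin hm t < c ↔ (t : ℕ) < posn J c := by
  constructor
  · intro h
    have hsub : (Finset.Iic t).image (J.orderEmbOfFin hm) ⊆ J.filter (fun e => e < c) := by
      intro e he
      simp only [Finset.mem_image, Finset.mem_Iic] at he
      obtain ⟨s, hs, rfl⟩ := he
      exact Finset.mem_filter.2 ⟨Finset.orderEmbOfFin_mem _ _ _,
        lt_of_le_of_lt ((J.orderEmbOfFin hm).monotone hs) h⟩
    have hcard := Finset.card_le_card hsub
    rwa [Finset.card_image_of_injective _ (J.orderEmbOfFin hm).injective, Fin.card_Iic,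
      Nat.succ_le_iff] at hcard
  · intro h
    by_contra h'
    have hne : J.orderEmbOfFin hm t ≠ c := fun he => hc (he ▸ Finset.orderEmbOfFin_mem _ _ _)
    have hgt : c < J.orderEmbOfFin hm t := lt_of_le_of_ne (not_lt.1 h') (Ne.symm hne)
    have hsub : J.filter (fun e => e < c) ⊆ (Finset.Iio t).image (J.orderEmbOfFin hm) := by
      intro e he
      obtain ⟨heJ, hec⟩ := Finset.mem_filter.1 he
      have : e ∈ Set.range (J.orderEmbOfFin hm) := by
        rw [Finset.range_orderEmbOfFin]; exact heJ
      obtain ⟨s, rfl⟩ := this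
      refine Finset.mem_image.2 ⟨s, Finset.mem_Iio.2 ?_, rfl⟩
      exact (J.orderEmbOfFin hm).strictMono.lt_iff_lt.1 (hec.trans hgt)
    have hcard := Finset.card_le_card hsub
    rw [Finset.card_image_of_injective _ (J.orderEmbOfFin hm).injective, Fin.card_Iio] at hcard
    exact absurd (lt_of_lt_of_le h hcard) (lt_irrefl _)

lemma emb_insert {J : Finset (Fin n)} {m : ℕ} (hm : J.card = m) {c : Fin n} (hc : c ∉ J)
    (h' : (insert c J).card = m + 1) (t : Fin (m + 1)) :
    (insert c J).orderEmbOfFin h' t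
      = (Fin.cons c (fun s => J.orderEmbOfFin hm s) : Fin (m+1) → Fin n)
          (Fin.cycleRange ⟨posn J c, Nat.lt_succ_of_le (hm ▸ posn_le J c)⟩ t) := by
  set p : Fin (m + 1) := ⟨posn J c, Nat.lt_succ_of_le (hm ▸ posn_le J c)⟩ with hp
  set g : Fin m → Fin n := fun s => J.orderEmbOfFin hm s with hg
  have key : (fun t => (Fin.cons c g : Fin (m+1) → Fin n) (Fin.cycleRange p t) : Fin (m+1) → Fin n)
      = (insert c J).orderEmbOfFin h' := by
    apply Finset.orderEmbOfFin_unique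
    · intro y
      induction (Fin.cycleRange p y) using Fin.cases with
      | zero => simpa using Finset.mem_insert_self c J
      | succ s =>
          simp only [Fin.cons_succ]
          exact Finset.mem_insert_of_mem (Finset.orderEmbOfFin_mem _ _ _)
    · rw [Fin.strictMono_iff_lt_succ]
      intro u
      have hpv : (p : ℕ) = posn J c := rfl
      rcases lt_trichotomy ((u : ℕ) + 1) (p : ℕ) with h1 | h1 | h1
      · -- u + 1 < posn : both below p
        have hcs : u.castSucc < p := by
          rw [Fin.lt_def]; exact Nat.lt_of_succ_lt h1
        have hss : u.succ < p := by simp only [Fin.lt_def, Fin.val_succ]; omega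
        rw [Fin.cycleRange_of_lt hcs, Fin.cycleRange_of_lt hss, Fin.coeSucc_eq_succ,
          Fin.cons_succ]
        have hu1 : (u : ℕ) + 1 < m := lt_of_lt_of_le h1 (by
          simpa [hp] using (hm ▸ posn_le J c))
        have : u.succ + 1 = Fin.succ (⟨(u : ℕ) + 1, hu1⟩ : Fin m) := by
          apply Fin.ext
          rw [Fin.val_add_one_of_lt]
          · simp
          · rw [Fin.lt_def]; simp only [Fin.val_succ, Fin.val_last]
            exact lt_of_lt_of_le h1 (by simpa [hp] using (hm ▸ posn_le J c))
        rw [this, Fin.cons_succ]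
        exact (J.orderEmbOfFin hm).strictMono (by rw [Fin.lt_def]; simp)
      · -- u + 1 = posn
        have hcs : u.castSucc < p := by simp only [Fin.lt_def, Fin.coe_castSucc]; omega
        have hss : u.succ = p := by apply Fin.ext; simpa using h1
        rw [Fin.cycleRange_of_lt hcs, Fin.cycleRange_of_eq hss, Fin.coeSucc_eq_succ,
          Fin.cons_succ, Fin.cons_zero]
        exact (orderEmbOfFin_lt_iff hm hc u).2 (by omega)
      · -- u + 1 > posn
        rcases Nat.lt_or_ge (p : ℕ) ((u : ℕ)) with h2 | h2
        · -- u > posn : both above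
          have hcs : p < u.castSucc := by simp only [Fin.lt_def, Fin.coe_castSucc]; omega
          have hss : p < u.succ := by simp only [Fin.lt_def, Fin.val_succ]; omega
          rw [Fin.cycleRange_of_gt hcs, Fin.cycleRange_of_gt hss]
          have hu0 : 0 < (u : ℕ) := by omega
          have : u.castSucc = Fin.succ (⟨(u : ℕ) - 1, by omega⟩ : Fin m) := by
            apply Fin.ext; simp; omega
          rw [this, Fin.cons_succ, Fin.cons_succ]
          exact (J.orderEmbOfFin hm).strictMono (by rw [Fin.lt_def]; simp; omega)
        · -- u = posn
          have hu : (u : ℕ) = (p : ℕ) := by omega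
          have hcs : u.castSucc = p := by apply Fin.ext; simpa using hu
          have hss : p < u.succ := by simp only [Fin.lt_def, Fin.val_succ]; omega
          rw [Fin.cycleRange_of_eq hcs, Fin.cycleRange_of_gt hss, Fin.cons_zero,
            Fin.cons_succ]
          have hne : J.orderEmbOfFin hm u ≠ c :=
            fun he => hc (he ▸ Finset.orderEmbOfFin_mem _ _ _)
          have := (orderEmbOfFin_lt_iff hm hc u).not.2 (by omega)
          exact lt_of_le_of_ne (not_lt.1 this) (Ne.symm hne)
  exact (congrFun key t).symm


variable {m : ℕ}

/-- Row-form `(m+1)×(m+1)` determinant: first row is `u` restricted to `succ` coordinates,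
remaining rows are the columns of `B` restricted to `succ` coordinates. -/
def phi (B : Matrix (Fin (m + 2)) (Fin m) R) (u : Fin (m + 2) → R) : R :=
  Matrix.det (Matrix.of (Fin.cons (fun s : Fin (m + 1) => u s.succ)
    (fun (t : Fin m) (s : Fin (m + 1)) => B s.succ t) : Fin (m + 1) → Fin (m + 1) → R))

/-- Row-form `(m+2)×(m+2)` determinant: rows `u`, `w`, then columns of `B`. -/
def psi (B : Matrix (Fin (m + 2)) (Fin m) R) (u w : Fin (m + 2) → R) : R :=
  Matrix.det (Matrix.of (Fin.cons u (Fin.cons w (fun (t : Fin m) (s : Fin (m + 2)) => B s t)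
    : Fin (m + 1) → Fin (m + 2) → R) : Fin (m + 2) → Fin (m + 2) → R))

def kay (B : Matrix (Fin (m + 2)) (Fin m) R) (p : Fin (m + 1)) : R :=
  Matrix.det (Matrix.of (fun (t s : Fin m) => B (Fin.succAbove p s).succ t))

lemma phi_expand (B : Matrix (Fin (m + 2)) (Fin m) R) (u : Fin (m + 2) → R) :
    phi B u = ∑ p : Fin (m + 1), (-1) ^ (p : ℕ) * u p.succ * kay B p := by
  rw [phi, Matrix.det_succ_row_zero]
  refine Finset.sum_congr rfl fun p _ => ?_
  rfl

lemma phi_col (B : Matrix (Fin (m + 2)) (Fin m) R) (t : Fin m) :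
    phi B (fun s => B s t) = 0 := by
  apply Matrix.det_zero_of_row_eq (i := (0 : Fin (m + 1))) (j := t.succ)
    (Fin.succ_ne_zero t).symm
  ext s
  simp

lemma plucker (B : Matrix (Fin (m + 2)) (Fin m) R) (a b c : Fin (m + 2) → R) :
    phi B a * psi B b c - phi B b * psi B a c + phi B c * psi B a b = 0 := by
  set Bc : Fin m → Fin (m + 2) → R := fun t s => B s t with hBc
  set V : Fin (m + 3) → Fin (m + 2) → R :=
    (Fin.cons a (Fin.cons b (Fin.cons c Bc : Fin (m + 1) → Fin (m + 2) → R)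
      : Fin (m + 2) → Fin (m + 2) → R) : Fin (m + 3) → Fin (m + 2) → R) with hV
  set M : Matrix (Fin (m + 3)) (Fin (m + 3)) R :=
    Matrix.of (fun t => (Fin.cons (phi B (V t)) (V t) : Fin (m + 3) → R)) with hM
  have hM0 : M.det = 0 := by
    rw [← Matrix.det_transpose]
    set cc : Fin (m + 3) → R :=
      (Fin.cons 0 (Fin.cons 0 (fun p : Fin (m + 1) => (-1) ^ (p : ℕ) * kay B p)
        : Fin (m + 2) → R) : Fin (m + 3) → R) with hcc
    have hrow : Mᵀ 0 = ∑ t2, cc t2 • Mᵀ t2 := by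
      funext t
      rw [Finset.sum_apply, Fin.sum_univ_succ, Fin.sum_univ_succ]
      simp only [hcc, Fin.cons_zero, Fin.cons_succ, Pi.smul_apply, smul_eq_mul,
        zero_mul, zero_add]
      show phi B (V t) = _
      rw [phi_expand]
      refine Finset.sum_congr rfl fun p _ => ?_
      have hMt : Mᵀ p.succ.succ t = V t p.succ := rfl
      rw [hMt]
      ring
    calc Mᵀ.det = (Mᵀ.updateRow 0 (∑ t2, cc t2 • Mᵀ t2)).det := by
          rw [← hrow, Matrix.updateRow_eq_self]
      _ = cc 0 • Mᵀ.det := Matrix.det_updateRow_sum _ _ _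
      _ = 0 := by rw [hcc]; simp
  have hexp : M.det
      = phi B a * psi B b c - phi B b * psi B a c + phi B c * psi B a b := by
    have hsub : ∀ t : Fin (m + 3),
        M.submatrix t.succAbove Fin.succ = Matrix.of (fun t' s => V (t.succAbove t') s) := by
      intro t; ext t' s
      simp [hM, Matrix.submatrix_apply]
    rw [Matrix.det_succ_column_zero, Fin.sum_univ_succ, Fin.sum_univ_succ, Fin.sum_univ_succ]
    have h0 : M.submatrix (0 : Fin (m + 3)).succAbove Fin.succ
        = Matrix.of (Fin.cons b (Fin.cons c Bc : Fin (m + 1) → Fin (m + 2) → R)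
            : Fin (m + 2) → Fin (m + 2) → R) := by
      rw [hsub]; ext t' s
      simp [hV, Fin.succAbove_zero]
    have h1 : M.submatrix (Fin.succ (0 : Fin (m + 2))).succAbove Fin.succ
        = Matrix.of (Fin.cons a (Fin.cons c Bc : Fin (m + 1) → Fin (m + 2) → R)
            : Fin (m + 2) → Fin (m + 2) → R) := by
      rw [hsub]; ext t' s
      refine Fin.cases ?_ (fun w => ?_) t' <;>
        simp [hV, Fin.succ_succAbove_zero, Fin.succ_succAbove_succ, Fin.zero_succAbove]
    have h2 : M.submatrix (Fin.succ (Fin.succ (0 : Fin (m + 1)))).succAbove Fin.succ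
        = Matrix.of (Fin.cons a (Fin.cons b Bc : Fin (m + 1) → Fin (m + 2) → R)
            : Fin (m + 2) → Fin (m + 2) → R) := by
      rw [hsub]; ext t' s
      refine Fin.cases ?_ (fun w => ?_) t'
      · rw [Matrix.of_apply, Fin.succ_succAbove_zero]
        simp [hV]
      · rw [Matrix.of_apply, Fin.succ_succAbove_succ]
        refine Fin.cases ?_ (fun w2 => ?_) w
        · rw [Fin.succ_succAbove_zero]
          simp [hV]
        · rw [Fin.succ_succAbove_succ, Fin.zero_succAbove]
          simp [hV]
    have hrest : ∀ t : Fin m, M (Fin.succ (Fin.succ (Fin.succ t))) 0 = 0 := by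
      intro t
      show phi B (V t.succ.succ.succ) = 0
      have hVt : V t.succ.succ.succ = fun s => B s t := by
        funext s; simp [hV, hBc, Fin.cons_succ]
      rw [hVt]; exact phi_col B t
    rw [h0, h1, h2]
    have hMa : M 0 0 = phi B a := rfl
    have hMb : M (Fin.succ (0 : Fin (m + 2))) 0 = phi B b := rfl
    have hMc : M (Fin.succ (Fin.succ (0 : Fin (m + 1)))) 0 = phi B c := rfl
    rw [hMa, hMb, hMc, Finset.sum_eq_zero (fun t _ => by rw [hrest t]; ring)]
    have hpb : Matrix.det (Matrix.of (Fin.cons b (Fin.cons c Bc : Fin (m + 1) → Fin (m + 2) → R)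
        : Fin (m + 2) → Fin (m + 2) → R)) = psi B b c := rfl
    have hpa : Matrix.det (Matrix.of (Fin.cons a (Fin.cons c Bc : Fin (m + 1) → Fin (m + 2) → R)
        : Fin (m + 2) → Fin (m + 2) → R)) = psi B a c := rfl
    have hpab : Matrix.det (Matrix.of (Fin.cons a (Fin.cons b Bc : Fin (m + 1) → Fin (m + 2) → R)
        : Fin (m + 2) → Fin (m + 2) → R)) = psi B a b := rfl
    rw [hpb, hpa, hpab]
    simp only [Fin.val_succ, Fin.val_zero]
    ring
  rw [← hexp, hM0]


lemma minor_eq (x : Matrix (Fin n) (Fin n) R) {A B : Finset (Fin n)} {k : ℕ}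
    (hA : A.card = k) (hB : B.card = k) :
    minor x A B = Matrix.det (Matrix.of fun i j : Fin k =>
      x (A.orderEmbOfFin hA i) (B.orderEmbOfFin hB j)) := by
  rw [minor, dif_pos (hA.trans hB.symm)]
  rw [← Matrix.det_submatrix_equiv_self (finCongr hA)
    (Matrix.of fun i j : Fin k => x (A.orderEmbOfFin hA i) (B.orderEmbOfFin hB j))]
  congr 1

end ThreeTermAux

open ThreeTermAux

/-- The three-term (Plücker-type) minor identity of Fomin–Zelevinsky (Theorem 1.16). -/
theorem minor_three_term_identity {n : ℕ} {R : Type*} [CommRing R]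
    (x : Matrix (Fin n) (Fin n) R) (I J : Finset (Fin n)) (hIJ : I.card = J.card + 1)
    (i : Fin n) (hiI : i ∉ I)
    (j k l : Fin n) (hjJ : j ∉ J) (hkJ : k ∉ J) (hlJ : l ∉ J)
    (hjk : j < k) (hkl : k < l) :
    minor x I (insert k J) * minor x (insert i I) (insert j (insert l J))
      = minor x I (insert j J) * minor x (insert i I) (insert k (insert l J))
        + minor x I (insert l J) * minor x (insert i I) (insert j (insert k J)) := by
  classical
  set m := J.card with hm
  have hIm : I.card = m + 1 := hIJ
  have hiIm : (insert i I).card = m + 2 := by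
    rw [Finset.card_insert_of_notMem hiI, hIm]
  set r : Fin (m + 1) → Fin n := fun s => I.orderEmbOfFin hIm s with hr
  set g : Fin m → Fin n := fun t => J.orderEmbOfFin hm.symm t with hg
  set B : Matrix (Fin (m + 2)) (Fin m) R :=
    Matrix.of (fun s t => x ((Fin.cons i r : Fin (m + 2) → Fin n) s) (g t)) with hB
  set col : Fin n → Fin (m + 2) → R :=
    fun d s => x ((Fin.cons i r : Fin (m + 2) → Fin n) s) d with hcoldef
  -- the `Φ` reduction
  have hPhi : ∀ d : Fin n, d ∉ J →
      minor x I (insert d J) = (-1) ^ (posn J d) * phi B (col d) := by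
    intro d hd
    have hcard : (insert d J).card = m + 1 := by
      rw [Finset.card_insert_of_notMem hd, hm]
    rw [minor_eq x hIm hcard]
    have hstep : (Matrix.of fun s t : Fin (m + 1) =>
          x (I.orderEmbOfFin hIm s) ((insert d J).orderEmbOfFin hcard t))
        = (Matrix.of fun s t : Fin (m + 1) =>
            x (r s) ((Fin.cons d g : Fin (m + 1) → Fin n) t)).submatrix id
          (Fin.cycleRange ⟨posn J d, Nat.lt_succ_of_le (hm.symm ▸ posn_le J d)⟩) := by
      ext s t
      rw [Matrix.submatrix_apply, Matrix.of_apply, Matrix.of_apply,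
        emb_insert hm.symm hd hcard t]
      rfl
    rw [hstep, Matrix.det_permute', Fin.sign_cycleRange]
    have htr : (Matrix.of fun s t : Fin (m + 1) =>
          x (r s) ((Fin.cons d g : Fin (m + 1) → Fin n) t))
        = (Matrix.of (Fin.cons (fun s : Fin (m + 1) => col d s.succ)
            (fun (t : Fin m) (s : Fin (m + 1)) => B s.succ t)
            : Fin (m + 1) → Fin (m + 1) → R))ᵀ := by
      ext s t
      refine Fin.cases ?_ (fun w => ?_) t <;>
        simp [hB, hcoldef, Matrix.transpose_apply, Fin.cons_succ, Fin.cons_zero]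
    rw [htr, Matrix.det_transpose]
    have : Matrix.det (Matrix.of (Fin.cons (fun s : Fin (m + 1) => col d s.succ)
            (fun (t : Fin m) (s : Fin (m + 1)) => B s.succ t)
            : Fin (m + 1) → Fin (m + 1) → R)) = phi B (col d) := rfl
    rw [this]
    simp
  -- the `Ψ` reduction
  have hPsi : ∀ d₁ d₂ : Fin n, d₁ ∉ J → d₂ ∉ J → d₁ < d₂ →
      minor x (insert i I) (insert d₁ (insert d₂ J))
        = (-1) ^ (posn I i + posn J d₁ + posn J d₂) * psi B (col d₁) (col d₂) := by
    intro d₁ d₂ hd₁ hd₂ hdlt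
    have h2 : d₁ ∉ insert d₂ J := by
      simp only [Finset.mem_insert, not_or]
      exact ⟨hdlt.ne, hd₁⟩
    have hc2 : (insert d₂ J).card = m + 1 := by
      rw [Finset.card_insert_of_notMem hd₂, hm]
    have hc1 : (insert d₁ (insert d₂ J)).card = m + 2 := by
      rw [Finset.card_insert_of_notMem h2, hc2]
    rw [minor_eq x hiIm hc1]
    set q : Fin (m + 2) := ⟨posn I i, Nat.lt_succ_of_le (hIm ▸ posn_le I i)⟩ with hq
    set p1 : Fin (m + 2) :=
      ⟨posn (insert d₂ J) d₁, Nat.lt_succ_of_le (hc2 ▸ posn_le _ d₁)⟩ with hp1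
    set p2 : Fin (m + 1) := ⟨posn J d₂, Nat.lt_succ_of_le (hm.symm ▸ posn_le J d₂)⟩ with hp2
    set sig : Equiv.Perm (Fin (m + 2)) :=
      Equiv.Perm.decomposeFin.symm (0, Fin.cycleRange p2) with hsig
    set N : Matrix (Fin (m + 2)) (Fin (m + 2)) R :=
      Matrix.of (fun s t => x ((Fin.cons i r : Fin (m + 2) → Fin n) s)
        ((Fin.cons d₁ (Fin.cons d₂ g : Fin (m + 1) → Fin n) : Fin (m + 2) → Fin n) t))
      with hN
    have hstep : (Matrix.of fun s t : Fin (m + 2) =>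
          x ((insert i I).orderEmbOfFin hiIm s)
            ((insert d₁ (insert d₂ J)).orderEmbOfFin hc1 t))
        = ((N.submatrix id sig).submatrix id (Fin.cycleRange p1)).submatrix
            (Fin.cycleRange q) id := by
      ext s t
      simp only [Matrix.submatrix_apply, Matrix.of_apply, id_eq]
      rw [emb_insert hIm hiI hiIm s, emb_insert hc2 h2 hc1 t]
      congr 1
      generalize (Fin.cycleRange p1 t) = y
      refine Fin.cases ?_ (fun w => ?_) y
      · simp [hsig, Equiv.Perm.decomposeFin_symm_apply_zero]
      · rw [Fin.cons_succ]
        rw [emb_insert hm.symm hd₂ hc2 w]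
        have : sig w.succ = (Fin.cycleRange p2 w).succ := by
          simp [hsig]
        rw [this, Fin.cons_succ]
    rw [hstep, Matrix.det_permute, Matrix.det_permute', Matrix.det_permute',
      Fin.sign_cycleRange, Fin.sign_cycleRange, hsig, Equiv.Perm.decomposeFin.symm_sign,
      Fin.sign_cycleRange]
    have htr : N = (Matrix.of (Fin.cons (col d₁) (Fin.cons (col d₂)
          (fun (t : Fin m) (s : Fin (m + 2)) => B s t) : Fin (m + 1) → Fin (m + 2) → R)
          : Fin (m + 2) → Fin (m + 2) → R))ᵀ := by
      ext s t
      refine Fin.cases ?_ (fun w => ?_) t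
      · simp [hN, hcoldef, Matrix.transpose_apply]
      · refine Fin.cases ?_ (fun w2 => ?_) w <;>
          simp [hN, hB, hcoldef, Matrix.transpose_apply, Fin.cons_succ]
    rw [htr, Matrix.det_transpose]
    have : Matrix.det (Matrix.of (Fin.cons (col d₁) (Fin.cons (col d₂)
          (fun (t : Fin m) (s : Fin (m + 2)) => B s t) : Fin (m + 1) → Fin (m + 2) → R)
          : Fin (m + 2) → Fin (m + 2) → R)) = psi B (col d₁) (col d₂) := rfl
    rw [this]
    push_cast [hp1, hq, hp2, Fin.val_mk]
    rw [posn_insert hdlt]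
    norm_num
    ring
  have hjl : j < l := hjk.trans hkl
  rw [hPhi k hkJ, hPhi j hjJ, hPhi l hlJ, hPsi j l hjJ hlJ hjl, hPsi k l hkJ hlJ hkl,
    hPsi j k hjJ hkJ hjk]
  have h3 := plucker B (col j) (col k) (col l)
  linear_combination (-(-1 : R) ^ (posn I i + posn J j + posn J k + posn J l)) * h3
end

section
/- Fix $n \geq 2$, a field $K$, and $1 \leq i \leq n-1$. With $h^i(X)$ the diagonal matrix whose first $i$ entries are $X$ and the rest $1$ (and $h^0(X) = h^n(X)$ interpreted with the same convention, using only indices in $\{0,\dots,n\}$), $e_i = I + E_{i,i+1}$, and $e_{-i} = I + E_{i+1,i}$, the following identity holds for all $X \in K$ with $X \neq 0$ and $X \neq -1$: $e_i\, h^i(X)\, e_{-i} = h^i(1+X)\, e_{-i}\, h^{i-1}(1+X^{-1})^{-1}\, h^i(X^{-1})\, h^{i+1}(1+X^{-1})^{-1}\, e_i\, h^i(1+X)$. -/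
/-- `h^i(X)`: the diagonal matrix whose first `i` diagonal entries equal `X` and
whose remaining diagonal entries equal `1`. -/
def hMat (n : ℕ) (K : Type*) [Field K] (i : ℕ) (X : K) : Matrix (Fin n) (Fin n) K :=
  Matrix.diagonal fun a => if (a : ℕ) < i then X else 1

/-- `e_i = I + E_{i,i+1}` (indices 1-based). -/
def eMat (n : ℕ) (K : Type*) [Field K] (j : ℕ) : Matrix (Fin n) (Fin n) K :=
  Matrix.of fun a b =>
    if a = b then 1 else if (a : ℕ) + 1 = j ∧ (b : ℕ) = j then 1 else 0

/-- `e_{-i} = I + E_{i+1,i}` (indices 1-based). -/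
def fMat (n : ℕ) (K : Type*) [Field K] (j : ℕ) : Matrix (Fin n) (Fin n) K :=
  Matrix.of fun a b =>
    if a = b then 1 else if (a : ℕ) = j ∧ (b : ℕ) + 1 = j then 1 else 0

open Matrix

lemma diag_mul_std {n : Type*} [DecidableEq n] [Fintype n] {K : Type*} [Field K]
    (v : n → K) (i j : n) (c : K) :
    diagonal v * Matrix.single i j c = Matrix.single i j (v i * c) := by
  ext a b
  rw [diagonal_mul]
  simp only [Matrix.single, of_apply, mul_ite, mul_zero]
  split_ifs with h
  · rw [h.1]
  · rfl

lemma std_mul_diag {n : Type*} [DecidableEq n] [Fintype n] {K : Type*} [Field K]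
    (v : n → K) (i j : n) (c : K) :
    Matrix.single i j c * diagonal v = Matrix.single i j (c * v j) := by
  ext a b
  rw [mul_diagonal]
  simp only [Matrix.single, of_apply, ite_mul, zero_mul]
  split_ifs with h
  · rw [h.2]
  · rfl

lemma hMat_inv (n : ℕ) (K : Type*) [Field K] (k : ℕ) (Y : K) (hY : Y ≠ 0) :
    (hMat n K k Y)⁻¹ = hMat n K k Y⁻¹ := by
  apply inv_eq_right_inv
  rw [hMat, hMat, diagonal_mul_diagonal]
  have : (fun a : Fin n => (if (a:ℕ) < k then Y else 1) * if (a:ℕ) < k then Y⁻¹ else 1)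
      = fun _ => (1:K) := by
    funext a
    split_ifs with h
    · exact mul_inv_cancel₀ hY
    · exact one_mul 1
  rw [this, diagonal_one]

set_option maxHeartbeats 4000000 in
/-- Fock–Goncharov's identity underlying the cluster `𝒳`-mutation:
`eᵢ hⁱ(X) e₋ᵢ = hⁱ(1+X) e₋ᵢ hⁱ⁻¹(1+X⁻¹)⁻¹ hⁱ(X⁻¹) hⁱ⁺¹(1+X⁻¹)⁻¹ eᵢ hⁱ(1+X)`. -/
theorem eMat_hMat_fMat_mutation (n : ℕ) (hn : 2 ≤ n) (K : Type*) [Field K]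
    (i : ℕ) (hi1 : 1 ≤ i) (hi : i ≤ n - 1) (X : K) (hX0 : X ≠ 0) (hX1 : X ≠ -1) :
    eMat n K i * hMat n K i X * fMat n K i
      = hMat n K i (1 + X) * fMat n K i * (hMat n K (i - 1) (1 + X⁻¹))⁻¹ *
          hMat n K i X⁻¹ * (hMat n K (i + 1) (1 + X⁻¹))⁻¹ * eMat n K i *
          hMat n K i (1 + X) := by
  have h1X : (1 : K) + X ≠ 0 := by
    intro h; exact hX1 (by linear_combination h)
  have hXi : (1 : K) + X⁻¹ ≠ 0 := by
    intro h
    apply h1X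
    have := mul_eq_zero_of_right X h
    rw [mul_add, mul_one, mul_inv_cancel₀ hX0] at this
    linear_combination this
  have hiln : i < n := by omega
  have hiln' : i - 1 < n := by omega
  have hpq : (⟨i - 1, hiln'⟩ : Fin n) ≠ ⟨i, hiln⟩ := by
    simp only [ne_eq, Fin.mk.injEq]
    omega
  have hqp : (⟨i, hiln⟩ : Fin n) ≠ ⟨i - 1, hiln'⟩ := hpq.symm
  have he : eMat n K i = 1 + Matrix.single (⟨i - 1, hiln'⟩ : Fin n) ⟨i, hiln⟩ (1 : K) := by
    ext a b
    simp only [eMat, of_apply, Matrix.add_apply, Matrix.one_apply, Matrix.single]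
    by_cases hab : a = b
    · rw [if_pos hab, if_pos hab, if_neg, add_zero]
      rintro ⟨h1, h2⟩
      exact hpq ((h1.trans hab).trans h2.symm)
    · rw [if_neg hab, if_neg hab, zero_add]
      refine if_congr ?_ rfl rfl
      rw [Fin.ext_iff, Fin.ext_iff]
      simp only [Fin.val_mk]
      omega
  have hf : fMat n K i = 1 + Matrix.single (⟨i, hiln⟩ : Fin n) ⟨i - 1, hiln'⟩ (1 : K) := by
    ext a b
    simp only [fMat, of_apply, Matrix.add_apply, Matrix.one_apply, Matrix.single]
    by_cases hab : a = b
    · rw [if_pos hab, if_pos hab, if_neg, add_zero]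
      rintro ⟨h1, h2⟩
      exact hqp ((h1.trans hab).trans h2.symm)
    · rw [if_neg hab, if_neg hab, zero_add]
      refine if_congr ?_ rfl rfl
      rw [Fin.ext_iff, Fin.ext_iff]
      simp only [Fin.val_mk]
      omega
  rw [he, hf, hMat_inv n K (i-1) _ hXi, hMat_inv n K (i+1) _ hXi]
  simp only [hMat]
  simp only [mul_add, add_mul, one_mul, mul_one, diagonal_mul_diagonal, diag_mul_std,
    std_mul_diag, Matrix.single_mul_single_same,
    Matrix.single_mul_single_of_ne (h := hpq), Matrix.single_mul_single_of_ne (h := hqp),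
    mul_zero, zero_mul, add_zero, zero_add]
  ext a b
  simp only [Matrix.add_apply, diagonal_apply, Matrix.single, of_apply, Fin.ext_iff,
    Fin.val_mk]
  have key1 : (1 + X⁻¹)⁻¹ = X * (1 + X)⁻¹ := by
    have h : 1 + X⁻¹ = (1 + X) * X⁻¹ := by field_simp; ring
    rw [h, _root_.mul_inv_rev, inv_inv, mul_comm]
  simp only [key1]
  split_ifs <;> (try omega) <;> (try rfl) <;> (try ring) <;>
    (field_simp; try ring; try (field_simp; ring))
end

section
/- Let $I$ be a finite set, $\epsilon : I \times I \to \mathbb{Z}$ skew-symmetric, $k \in I$, and $F$ a field. Given $A : I \to F^\times$, define $X_i = \prod_{j \in I} A_j^{\epsilon_{ij}}$ and assume $1 + X_k \neq 0$. Let $A'_k = A_k^{-1}\left(\prod_{\epsilon_{kj} > 0} A_j^{\epsilon_{kj}} + \prod_{\epsilon_{kj} < 0} A_j^{-\epsilon_{kj}}\right)$ and $A'_i = A_i$ for $i \neq k$, let $\epsilon' = \mu_k(\epsilon)$ be the mutated exchange matrix, and set $X'_i = \prod_{j \in I} (A'_j)^{\epsilon'_{ij}}$. Then $X'_k = X_k^{-1}$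 and $X'_i = X_i (1 + X_k^{-\mathrm{sign}(\epsilon_{ik})})^{-\epsilon_{ik}}$ for $i \neq k$. -/
/-- Seed (quiver) mutation of a skew-symmetric exchange matrix at `k`. -/
def mutMatrix {I : Type*} [DecidableEq I] (ε : I → I → ℤ) (k : I) : I → I → ℤ :=
  fun i j =>
    if i = k ∨ j = k then -ε i j
    else if ε i k * ε k j ≤ 0 then ε i j
    else ε i j + |ε i k| * ε k j

open Finset in
private lemma prod_zpow_add' {I : Type*} {F : Type*} [Field F] (s : Finset I)
    (A : I → F) (hA : ∀ j, A j ≠ 0) (e f : I → ℤ) :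
    ∏ j ∈ s, A j ^ (e j + f j) = (∏ j ∈ s, A j ^ e j) * (∏ j ∈ s, A j ^ f j) := by
  rw [← Finset.prod_mul_distrib]
  exact Finset.prod_congr rfl fun j _ => zpow_add₀ (hA j) _ _

open Finset in
/-- The `p`-maps commute with cluster mutations: if `X_i = ∏_j A_j^{ε_{ij}}`,
and `A'` is the cluster `𝒜`-mutation of `A` at `k` while `X'_i = ∏_j A'_j^{ε'_{ij}}`
with `ε' = μ_k(ε)`, then `X'` is the cluster `𝒳`-mutation of `X` at `k`. -/
theorem p_map_commutes_with_mutation {I : Type*} [Fintype I] [DecidableEq I]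
    {F : Type*} [Field F] (ε : I → I → ℤ) (hskew : ∀ i j, ε j i = -ε i j) (k : I)
    (A : I → F) (hA : ∀ j, A j ≠ 0)
    (X : I → F) (hX : ∀ i, X i = ∏ j, A j ^ ε i j)
    (h1 : 1 + X k ≠ 0)
    (A' : I → F)
    (hA'k : A' k = (A k)⁻¹ *
      ((∏ j ∈ univ.filter fun j => 0 < ε k j, A j ^ ε k j) +
        ∏ j ∈ univ.filter fun j => ε k j < 0, A j ^ (-ε k j)))
    (hA'ne : ∀ i, i ≠ k → A' i = A i)
    (X' : I → F) (hX' : ∀ i, X' i = ∏ j, A' j ^ mutMatrix ε k i j) :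
    X' k = (X k)⁻¹ ∧
    ∀ i, i ≠ k → X' i = X i * (1 + X k ^ (-(ε i k).sign)) ^ (-(ε i k)) := by
  classical
  have hEkk : ε k k = 0 := by have := hskew k k; omega
  set P : F := ∏ j, A j ^ max (ε k j) 0 with hP
  set N : F := ∏ j, A j ^ max (-ε k j) 0 with hN
  have hPne : P ≠ 0 := Finset.prod_ne_zero_iff.2 fun j _ => zpow_ne_zero _ (hA j)
  have hNne : N ≠ 0 := Finset.prod_ne_zero_iff.2 fun j _ => zpow_ne_zero _ (hA j)
  have hXkne : X k ≠ 0 := by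
    rw [hX]; exact Finset.prod_ne_zero_iff.2 fun j _ => zpow_ne_zero _ (hA j)
  have hXkN : X k * N = P := by
    rw [hX k, hN, hP, ← prod_zpow_add' _ A hA]
    refine Finset.prod_congr rfl fun j _ => ?_
    congr 1; omega
  have hfP : (∏ j ∈ univ.filter fun j => 0 < ε k j, A j ^ ε k j) = P := by
    rw [Finset.prod_filter, hP]
    refine Finset.prod_congr rfl fun j _ => ?_
    split_ifs with h
    · congr 1; omega
    · rw [show max (ε k j) 0 = 0 by omega, zpow_zero]
  have hfN : (∏ j ∈ univ.filter fun j => ε k j < 0, A j ^ (-ε k j)) = N := by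
    rw [Finset.prod_filter, hN]
    refine Finset.prod_congr rfl fun j _ => ?_
    split_ifs with h
    · congr 1; omega
    · rw [show max (-ε k j) 0 = 0 by omega, zpow_zero]
  rw [hfP, hfN] at hA'k
  have hPN : P + N = N * (1 + X k) := by
    rw [mul_add, mul_one, mul_comm N (X k), hXkN]; ring
  have hPNne : P + N ≠ 0 := by rw [hPN]; exact mul_ne_zero hNne h1
  have hXkinv : (X k)⁻¹ = N / P := by
    rw [eq_div_iff hPne, ← hXkN, inv_mul_cancel_left₀ hXkne]
  constructor
  · rw [hX' k, hX k, ← Finset.prod_inv_distrib]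
    refine Finset.prod_congr rfl fun j _ => ?_
    rw [← zpow_neg]
    by_cases hj : j = k
    · subst hj; simp [mutMatrix, hEkk]
    · rw [hA'ne j hj]
      congr 1
      simp [mutMatrix]
  · intro i hik
    -- splitting lemma for X' i
    have hXi' : X' i = A' k ^ (-ε i k) *
        ∏ j ∈ univ.erase k, A j ^
          (ε i j + (if ε i k * ε k j ≤ 0 then 0 else |ε i k| * ε k j)) := by
      rw [hX' i, ← Finset.mul_prod_erase _ _ (Finset.mem_univ k)]
      congr 1
      · congr 1
        simp [mutMatrix]
      · refine Finset.prod_congr rfl fun j hj => ?_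
        have hjk : j ≠ k := (Finset.mem_erase.1 hj).1
        rw [hA'ne j hjk]
        congr 1
        simp only [mutMatrix, hik, hjk, or_self, if_false]
        split_ifs <;> ring
    have hXi : X i = A k ^ ε i k *
        ∏ j ∈ univ.erase k, A j ^ ε i j := by
      rw [hX i, ← Finset.mul_prod_erase _ _ (Finset.mem_univ k)]
    -- separate the correction term
    have hXi'2 : X' i = A' k ^ (-ε i k) * ((∏ j ∈ univ.erase k, A j ^ ε i j) *
        ∏ j, A j ^ (if ε i k * ε k j ≤ 0 then 0 else |ε i k| * ε k j)) := by
      rw [hXi', prod_zpow_add' _ A hA]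
      congr 1
      congr 1
      rw [Finset.prod_erase]
      rw [show (if ε i k * ε k k ≤ 0 then 0 else |ε i k| * ε k k) = 0 by
        simp [hEkk]]
      exact zpow_zero _
    rcases lt_trichotomy (ε i k) 0 with hc | hc | hc
    · -- ε i k < 0 : correction is N ^ (ε i k), factor is 1 + X k
      have hsign : (ε i k).sign = -1 := Int.sign_eq_neg_one_iff_neg.2 hc
      have hcorr : (∏ j, A j ^ (if ε i k * ε k j ≤ 0 then 0 else |ε i k| * ε k j))
          = N ^ (ε i k) := by
        rw [hN, ← Finset.prod_zpow]
        refine Finset.prod_congr rfl fun j _ => ?_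
        rw [← zpow_mul]
        congr 1
        rcases le_or_gt 0 (ε k j) with h | h
        · rw [if_pos (by nlinarith), show max (-ε k j) 0 = 0 by omega]
          ring
        · rw [if_neg (by nlinarith)]
          rw [abs_of_neg hc]
          have : max (-ε k j) 0 = -ε k j := by omega
          rw [this]; ring
      have hfac : 1 + X k ^ (-(ε i k).sign) = (P + N) / N := by
        rw [hsign]
        norm_num
        rw [hPN, mul_comm, mul_div_assoc, div_self hNne, mul_one]
      rw [hXi'2, hcorr, hA'k, hfac, hXi]
      rw [mul_zpow, inv_zpow, ← zpow_neg, neg_neg, div_zpow]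
      rw [div_eq_mul_inv, ← zpow_neg N (-(ε i k)), neg_neg]
      ring
    · -- ε i k = 0
      rw [hXi'2, hXi, hc]
      simp [hEkk]
    · -- 0 < ε i k : correction is P ^ (ε i k), factor is 1 + (X k)⁻¹
      have hsign : (ε i k).sign = 1 := Int.sign_eq_one_iff_pos.2 hc
      have hcorr : (∏ j, A j ^ (if ε i k * ε k j ≤ 0 then 0 else |ε i k| * ε k j))
          = P ^ (ε i k) := by
        rw [hP, ← Finset.prod_zpow]
        refine Finset.prod_congr rfl fun j _ => ?_
        rw [← zpow_mul]
        congr 1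
        rcases le_or_gt (ε k j) 0 with h | h
        · rw [if_pos (by nlinarith), show max (ε k j) 0 = 0 by omega]
          ring
        · rw [if_neg (by nlinarith)]
          rw [abs_of_pos hc]
          have : max (ε k j) 0 = ε k j := by omega
          rw [this]; ring
      have hfac : 1 + X k ^ (-(ε i k).sign) = (P + N) / P := by
        rw [hsign, zpow_neg, zpow_one, hXkinv]
        field_simp
      rw [hXi'2, hcorr, hA'k, hfac, hXi]
      rw [mul_zpow, inv_zpow, ← zpow_neg, neg_neg, div_zpow]
      rw [div_eq_mul_inv, ← zpow_neg P (-(ε i k)), neg_neg]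
      ring
end
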